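/- For every k ≥ 2, the pair of partitions λ = (2^{k-1},1,1,1), μ = (k-1,1) is a codimension-3 decoration. Moreover for k ≥ 4 its smallest minimal link is ((k-1, k-3, k-3, k-3, 1), (2^{k-4},1,1,1)), and the smallest minimal link of that pair is ((2^{k-3},1,1,1),(k-3,1)). -/

import Mathlib

/-- Sort a list of integers in non-increasing order. -/
def rsort (l : List ℤ) : List ℤ := List.insertionSort (· ≥ ·) l

/-- Remove all non-positive parts (trailing zeros) from a partition. -/
def strip (l : List ℤ) : List ℤ := l.filter (fun x => 0 < x)

/-- The smallest minimal link of a codimension-`c` pair of partitions `(λ, μ)`: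
choose the `c` largest parts of `λ` (padding with zeros if needed), shift them by
`p = (c-2)k + 1 - (λ₁ + ⋯ + λ_c)` where `k = ∑ μⱼ`, merge with `μ` and re-sort;
the other partition becomes `(λ_{c+1}, …, λ_b)`. -/
def smlink (c : ℕ) (P : List ℤ × List ℤ) : List ℤ × List ℤ :=
  let p : ℤ := ((c : ℤ) - 2) * P.2.sum + 1 - (P.1.take c).sum
  (strip (rsort ((P.1.take c ++ List.replicate (c - P.1.length) 0).map (· + p) ++ P.2)),
   strip (P.1.drop c))

/-- The smallest minimal link of `P` produces nonnegative parts, i.e. `λ_c + p ≥ 0`. -/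
def ValidLink (c : ℕ) (P : List ℤ × List ℤ) : Prop :=
  0 ≤ P.1.getD (c - 1) 0 + (((c : ℤ) - 2) * P.2.sum + 1 - (P.1.take c).sum)

/-- A partition: a non-increasing list of positive integers. -/
def IsPartition (l : List ℤ) : Prop := l.Pairwise (· ≥ ·) ∧ ∀ x ∈ l, 0 < x

/-- A codimension-`c` decoration: a pair of partitions reachable to the complete
intersection pair `((1^c), (1))` by finitely many smallest minimal links, all of
whose intermediate links are valid (have nonnegative parts). -/
def IsDecoration (c : ℕ) (P : List ℤ × List ℤ) : Prop :=
  IsPartition P.1 ∧ IsPartition P.2 ∧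
  ∃ n : ℕ, (∀ m < n, ValidLink c ((smlink c)^[m] P)) ∧
    (smlink c)^[n] P = (List.replicate c 1, [1])

/-! ### Auxiliary lemmas -/

lemma strip_append (a b : List ℤ) : strip (a ++ b) = strip a ++ strip b :=
  List.filter_append _ _

lemma strip_pos {l : List ℤ} (h : ∀ x ∈ l, 0 < x) : strip l = l :=
  List.filter_eq_self.mpr (fun x hx => by simpa using h x hx)

lemma oiA (m : ℕ) : List.orderedInsert (fun x1 x2 : ℤ => x2 ≤ x1) 0
    (List.replicate m 2 ++ [1,1,1]) = List.replicate m 2 ++ [1,1,1,0] := by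
  induction m with
  | zero => decide
  | succ m ih => simp only [List.replicate_succ, List.cons_append, List.orderedInsert,
      if_neg (by omega : ¬(2:ℤ) ≤ 0), List.append_eq, ih]

lemma oiB (m : ℕ) : List.orderedInsert (fun x1 x2 : ℤ => x2 ≤ x1) 0
    (List.replicate m 2 ++ [1,1,1,0]) = List.replicate m 2 ++ [1,1,1,0,0] := by
  induction m with
  | zero => decide
  | succ m ih => simp only [List.replicate_succ, List.cons_append, List.orderedInsert,
      if_neg (by omega : ¬(2:ℤ) ≤ 0), List.append_eq, ih]

lemma oiC (m : ℕ) : List.orderedInsert (fun x1 x2 : ℤ => x2 ≤ x1) 2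
    (List.replicate m 2 ++ [1,1,1,0,0]) = List.replicate (m+1) 2 ++ [1,1,1,0,0] := by
  cases m with
  | zero => decide
  | succ m => simp [List.replicate_succ, List.orderedInsert]

lemma sortedRep (m : ℕ) : List.Pairwise (fun x1 x2 : ℤ => x2 ≤ x1)
    (List.replicate m 2 ++ [1,1,1]) := by
  rw [List.pairwise_append]
  refine ⟨List.pairwise_replicate.mpr (Or.inr (le_refl 2)), ?_, ?_⟩
  · decide
  · intro x hx y hy
    rw [List.eq_of_mem_replicate hx]
    simp at hy; rcases hy with h|h|h <;> omega

lemma sortRep (m : ℕ) : List.insertionSort (fun x1 x2 : ℤ => x2 ≤ x1)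
    (List.replicate m 2 ++ [1,1,1]) = List.replicate m 2 ++ [1,1,1] :=
  List.Pairwise.insertionSort_eq (sortedRep m)

lemma linkA (m : ℕ) :
    smlink 3 (List.replicate (m+3) (2 : ℤ) ++ [1, 1, 1], [(m : ℤ) + 3, 1])
      = ([(m:ℤ)+3, (m:ℤ)+1, (m:ℤ)+1, (m:ℤ)+1, 1], List.replicate m (2:ℤ) ++ [1,1,1]) := by
  simp only [smlink, rsort, List.replicate_succ, List.insertionSort, List.orderedInsert,
    List.cons_append, List.take_succ_cons, List.take_zero, List.sum_cons, List.sum_nil,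
    List.length_cons, List.map_cons, List.map_nil, List.drop_succ_cons, List.drop_zero,
    List.nil_append, List.append_nil]
  norm_num
  rw [show (2:ℤ) + (↑m + 3 + 1 + 1 - 6) = ↑m + 1 by ring]
  rw [if_pos (by omega : (1:ℤ) ≤ ↑m+3)]
  simp only [List.orderedInsert]
  rw [if_neg (by omega : ¬((m:ℤ)+3 ≤ (m:ℤ)+1)), if_pos (by omega : (1:ℤ) ≤ (m:ℤ)+1)]
  simp only [List.orderedInsert]
  rw [if_neg (by omega : ¬((m:ℤ)+3 ≤ (m:ℤ)+1)), if_pos (by omega : ((m:ℤ)+1 ≤ (m:ℤ)+1))]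
  simp only [List.orderedInsert]
  rw [if_neg (by omega : ¬((m:ℤ)+3 ≤ (m:ℤ)+1)), if_pos (by omega : ((m:ℤ)+1 ≤ (m:ℤ)+1))]
  rw [strip_pos (by intro x hx; simp at hx; rcases hx with h|h|h|h|h <;> omega)]
  refine ⟨rfl, strip_pos ?_⟩
  intro x hx
  simp [List.mem_replicate] at hx
  rcases hx with ⟨_,h⟩|h|h|h <;> omega

lemma linkB (m : ℕ) :
    smlink 3 ([(m:ℤ)+3, (m:ℤ)+1, (m:ℤ)+1, (m:ℤ)+1, 1], List.replicate m (2:ℤ) ++ [1,1,1])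
      = (List.replicate (m+1) (2:ℤ) ++ [1,1,1], [(m:ℤ)+1, 1]) := by
  simp only [smlink, rsort, List.take_succ_cons, List.take_zero, List.sum_cons, List.sum_nil,
    List.length_cons, List.map_cons, List.map_nil, List.drop_succ_cons, List.drop_zero,
    List.insertionSort, List.cons_append, List.nil_append, ge_iff_le, List.length_nil,
    List.sum_append, List.sum_replicate, smul_eq_mul, List.append_eq]
  norm_num
  have hs : List.foldr (List.orderedInsert fun x1 x2 : ℤ => x1 ≥ x2) [1,1,1] (List.replicate m 2)
      = List.replicate m 2 ++ [1,1,1] := by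
    have := sortRep m
    simp only [List.insertionSort, List.foldr_append] at this
    exact this
  rw [show ((m:ℤ) + 3 + (↑m * 2 + 3 + 1 - (↑m + 3 + (↑m + 1 + (↑m + 1))))) = 2 by ring,
     show ((m:ℤ) + 1 + (↑m * 2 + 3 + 1 - (↑m + 3 + (↑m + 1 + (↑m + 1))))) = 0 by ring,
     hs, oiA, oiB, oiC]
  refine ⟨?_, strip_pos (by intro x hx; simp at hx; rcases hx with h|h|h <;> omega)⟩
  rw [show (List.replicate (m+1) (2:ℤ) ++ [1,1,1,0,0]) = (List.replicate (m+1) (2:ℤ) ++ [1,1,1]) ++ [0,0] by simp, strip_append]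
  rw [strip_pos (by intro x hx; simp [List.mem_replicate] at hx; rcases hx with ⟨_,h⟩|h|h|h <;> omega)]
  simp [strip]

lemma validA (m : ℕ) :
    ValidLink 3 (List.replicate (m+3) (2 : ℤ) ++ [1, 1, 1], [(m : ℤ) + 3, 1]) := by
  simp [ValidLink, List.replicate_succ]
  omega

lemma validB (m : ℕ) :
    ValidLink 3 ([(m:ℤ)+3, (m:ℤ)+1, (m:ℤ)+1, (m:ℤ)+1, 1], List.replicate m (2:ℤ) ++ [1,1,1]) := by
  simp [ValidLink, List.sum_replicate]
  omega

/-- The pair for a given `k`. -/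
def pairk (k : ℕ) : List ℤ × List ℤ :=
  (List.replicate (k - 1) (2 : ℤ) ++ [1, 1, 1], [(k : ℤ) - 1, 1])

lemma pairk_eq (m : ℕ) :
    pairk (m + 2) = (List.replicate (m+1) (2 : ℤ) ++ [1, 1, 1], [(m : ℤ) + 1, 1]) := by
  simp only [pairk]
  rw [show ((m+2:ℕ):ℤ) - 1 = (m:ℤ)+1 by push_cast; ring]
  rfl

lemma deco_aux : ∀ k, 2 ≤ k → ∃ n : ℕ,
    (∀ m < n, ValidLink 3 ((smlink 3)^[m] (pairk k))) ∧
    (smlink 3)^[n] (pairk k) = (List.replicate 3 1, [1]) := by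
  intro k
  induction k using Nat.strong_induction_on with
  | _ k ih =>
    intro hk
    by_cases h4 : 4 ≤ k
    · obtain ⟨m, rfl⟩ : ∃ m, k = m + 4 := ⟨k - 4, by omega⟩
      have hpair : pairk (m + 4) = (List.replicate (m+3) (2 : ℤ) ++ [1, 1, 1], [(m : ℤ) + 3, 1]) := by
        have := pairk_eq (m + 2)
        rw [show m + 2 + 2 = m + 4 from rfl] at this
        rw [this]; congr 2 <;> push_cast <;> ring
      have h2 : (smlink 3)^[2] (pairk (m+4)) = pairk (m+2) := by
        rw [hpair]
        rw [show ((smlink 3)^[2] : _ ) = smlink 3 ∘ smlink 3 from rfl]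
        simp only [Function.comp_apply]
        rw [linkA m, linkB m, pairk_eq m]
      obtain ⟨n, hv, he⟩ := ih (m + 2) (by omega) (by omega)
      refine ⟨n + 2, ?_, ?_⟩
      · intro j hj
        match j with
        | 0 => rw [Function.iterate_zero_apply, hpair]; exact validA m
        | 1 => rw [Function.iterate_one, hpair, linkA m]; exact validB m
        | (j+2) =>
          rw [show j + 2 = j + 2 from rfl, Function.iterate_add_apply, h2]
          exact hv j (by omega)
      · rw [show n + 2 = n + 2 from rfl, Function.iterate_add_apply, h2, he]
    · have h2pair : pairk 2 = ([2,1,1,1], [1,1]) := by norm_num [pairk]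
      have h3pair : pairk 3 = ([2,2,1,1,1], [2,1]) := by norm_num [pairk, List.replicate_succ]
      have hl3 : smlink 3 ([2,2,1,1,1], ([2,1] : List ℤ)) = ([2,1,1,1],[1,1]) := by decide
      have hl2 : smlink 3 ([2,1,1,1], ([1,1] : List ℤ)) = (List.replicate 3 1, [1]) := by decide
      interval_cases k
      · -- k = 2
        refine ⟨1, ?_, ?_⟩
        · intro j hj
          interval_cases j
          rw [Function.iterate_zero_apply, h2pair]
          norm_num [ValidLink]
        · rw [Function.iterate_one, h2pair, hl2]
      · -- k = 3
        refine ⟨2, ?_, ?_⟩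
        · intro j hj
          interval_cases j
          · rw [Function.iterate_zero_apply, h3pair]; norm_num [ValidLink]
          · rw [Function.iterate_one, h3pair, hl3]; norm_num [ValidLink]
        · rw [show ((smlink 3)^[2]) (pairk 3) = smlink 3 (smlink 3 (pairk 3)) from rfl,
            h3pair, hl3, hl2]

/-- For every `k ≥ 2`, the pair `λ = (2^{k-1},1,1,1)`, `μ = (k-1,1)` is a
codimension-3 decoration. Moreover for `k ≥ 4` its smallest minimal link is
`((k-1, k-3, k-3, k-3, 1), (2^{k-4},1,1,1))`, and the smallest minimal link of
that pair is `((2^{k-3},1,1,1), (k-3,1))`. -/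
theorem stmt8 (k : ℕ) (hk : 2 ≤ k) :
    IsDecoration 3 (List.replicate (k - 1) (2 : ℤ) ++ [1, 1, 1], [(k : ℤ) - 1, 1]) ∧
    (4 ≤ k →
      smlink 3 (List.replicate (k - 1) (2 : ℤ) ++ [1, 1, 1], [(k : ℤ) - 1, 1])
        = ([(k : ℤ) - 1, (k : ℤ) - 3, (k : ℤ) - 3, (k : ℤ) - 3, 1],
           List.replicate (k - 4) (2 : ℤ) ++ [1, 1, 1]) ∧
      smlink 3 ([(k : ℤ) - 1, (k : ℤ) - 3, (k : ℤ) - 3, (k : ℤ) - 3, 1],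
           List.replicate (k - 4) (2 : ℤ) ++ [1, 1, 1])
        = (List.replicate (k - 3) (2 : ℤ) ++ [1, 1, 1], [(k : ℤ) - 3, 1])) := by
  constructor
  · refine ⟨⟨sortedRep _, ?_⟩, ⟨?_, ?_⟩, deco_aux k hk⟩
    · intro x hx
      simp [List.mem_replicate] at hx
      rcases hx with ⟨_,h⟩|h|h|h <;> omega
    · simp [List.Pairwise]
      omega
    · intro x hx
      simp at hx
      rcases hx with h|h <;> omega
  · intro h4
    obtain ⟨m, rfl⟩ : ∃ m, k = m + 4 := ⟨k - 4, by omega⟩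
    have e1 : ((m:ℤ) + 4) - 1 = (m:ℤ) + 3 := by ring
    have e3 : ((m:ℤ) + 4) - 3 = (m:ℤ) + 1 := by ring
    constructor
    · rw [show (m + 4 - 1) = m + 3 from rfl, show (m + 4 - 4) = m from rfl]
      push_cast
      rw [e1, e3]
      exact linkA m
    · rw [show (m + 4 - 4) = m from rfl, show (m + 4 - 3) = m + 1 from rfl]
      push_cast
      rw [e1, e3]
      exact linkB m
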